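/- arXiv:2602.11803 — 3 statements merged into one kernel-verified Lean document; each statement's English description precedes it below -/
import Mathlib

section
/- Let n ≥ 2, let E be a real inner product space, and let h : Fin n → Fin n → E be symmetric (h i j = h j i). Then ⟪h 0 0, h 1 1⟫ − ‖h 0 1‖² ≥ ‖∑_i h i i‖² / (2*(n−1)) − (1/2) * ∑_{i,j} ‖h i j‖². -/
open scoped RealInnerProductSpace

lemma aux_norm_sum_sq_le {E : Type*} [NormedAddCommGroup E] [InnerProductSpace ℝ E]
    (m : ℕ) (v : Fin m → E) : ‖∑ i, v i‖ ^ 2 ≤ (m : ℝ) * ∑ i, ‖v i‖ ^ 2 := by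
  have h1 : ‖∑ i, v i‖ ≤ ∑ i, ‖v i‖ := norm_sum_le _ _
  have h2 : (∑ i, ‖v i‖) ^ 2 ≤ ((Finset.univ : Finset (Fin m)).card : ℝ) * ∑ i, ‖v i‖ ^ 2 := by
    exact_mod_cast sq_sum_le_card_mul_sum_sq (s := (Finset.univ : Finset (Fin m)))
      (f := fun i => ‖v i‖)
  calc ‖∑ i, v i‖ ^ 2 ≤ (∑ i, ‖v i‖) ^ 2 := by
        apply pow_le_pow_left₀ (norm_nonneg _) h1
    _ ≤ (m : ℝ) * ∑ i, ‖v i‖ ^ 2 := by simpa using h2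

theorem stmt_3 (n : ℕ) (hn : 2 ≤ n) (E : Type*) [NormedAddCommGroup E]
    [InnerProductSpace ℝ E] (h : Fin n → Fin n → E)
    (hsymm : ∀ i j, h i j = h j i) :
    ⟪h ⟨0, by omega⟩ ⟨0, by omega⟩, h ⟨1, by omega⟩ ⟨1, by omega⟩⟫
        - ‖h ⟨0, by omega⟩ ⟨1, by omega⟩‖ ^ 2
      ≥ ‖∑ i, h i i‖ ^ 2 / (2 * ((n : ℝ) - 1))
        - (1 / 2) * ∑ i, ∑ j, ‖h i j‖ ^ 2 := by
  obtain ⟨m, rfl⟩ : ∃ m, n = m + 2 := ⟨n - 2, by omega⟩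
  simp only [Fin.mk_zero, Fin.mk_one]
  set a : Fin (m + 2) → E := fun i => h i i with ha
  set A : ℝ := ⟪a 0, a 1⟫ with hA
  set B : ℝ := ‖h 0 1‖ ^ 2 with hB
  set S2 : ℝ := ∑ i, ‖a i‖ ^ 2 with hS2
  -- Fact 1 : ‖∑ a‖² ≤ (m+1) * (S2 + 2A)
  set w : Fin (m + 1) → E := Fin.cons (a 0 + a 1) (fun k : Fin m => a k.succ.succ) with hw
  have hsum_w : ∑ i, w i = ∑ i, a i := by
    rw [Fin.sum_univ_succ, Fin.sum_univ_succ, Fin.sum_univ_succ]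
    simp [hw, Fin.succ_zero_eq_one, add_assoc]
  have hsum_wsq : ∑ i, ‖w i‖ ^ 2 = S2 + 2 * A := by
    rw [hS2, Fin.sum_univ_succ, Fin.sum_univ_succ, Fin.sum_univ_succ]
    simp only [hw, Fin.cons_zero, Fin.cons_succ, Fin.succ_zero_eq_one]
    rw [norm_add_sq_real]
    ring
  have fact1 : ‖∑ i, a i‖ ^ 2 ≤ ((m : ℝ) + 1) * (S2 + 2 * A) := by
    have := aux_norm_sum_sq_le (m + 1) w
    rw [hsum_w, hsum_wsq] at this
    push_cast at this
    linarith
  -- Fact 2 : S2 + 2B ≤ ∑∑ ‖h i j‖²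
  have fact2 : S2 + 2 * B ≤ ∑ i, ∑ j, ‖h i j‖ ^ 2 := by
    have key : ∀ i : Fin (m + 2),
        ‖a i‖ ^ 2 + (if i = 0 then B else if i = 1 then B else 0)
          ≤ ∑ j, ‖h i j‖ ^ 2 := by
      intro i
      rcases eq_or_ne i 0 with rfl | h0
      · simp only [if_pos rfl]
        have : ∑ j ∈ ({0, 1} : Finset (Fin (m + 2))), ‖h 0 j‖ ^ 2
            ≤ ∑ j, ‖h 0 j‖ ^ 2 := by
          apply Finset.sum_le_sum_of_subset_of_nonneg (Finset.subset_univ _)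
          intros; positivity
        rwa [Finset.sum_pair zero_ne_one] at this
      rcases eq_or_ne i 1 with rfl | h1
      · simp only [if_neg h0, if_pos rfl]
        have : ∑ j ∈ ({1, 0} : Finset (Fin (m + 2))), ‖h 1 j‖ ^ 2
            ≤ ∑ j, ‖h 1 j‖ ^ 2 := by
          apply Finset.sum_le_sum_of_subset_of_nonneg (Finset.subset_univ _)
          intros; positivity
        rwa [Finset.sum_pair one_ne_zero, hsymm 1 0] at this
      · simp only [if_neg h0, if_neg h1, add_zero]
        exact Finset.single_le_sum (f := fun j => ‖h i j‖ ^ 2)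
          (fun j _ => by positivity) (Finset.mem_univ i)
    have hsum := Finset.sum_le_sum (fun i (_ : i ∈ Finset.univ) => key i)
    have hite : ∑ i : Fin (m + 2), (if i = 0 then B else if i = 1 then B else 0)
        = 2 * B := by
      rw [Fin.sum_univ_succ, Fin.sum_univ_succ]
      simp [Fin.succ_ne_zero, Fin.succ_succ_ne_one, Fin.succ_zero_eq_one]
      ring
    rw [Finset.sum_add_distrib, hite] at hsum
    exact hsum
  -- arithmetic
  have hm1 : (0 : ℝ) < (m : ℝ) + 1 := by positivity
  have hdiv : ‖∑ i, a i‖ ^ 2 / (2 * ((m : ℝ) + 1)) ≤ (S2 + 2 * A) / 2 := by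
    rw [div_le_div_iff₀ (by positivity) (by norm_num)]
    nlinarith [fact1]
  push_cast
  rw [show (m : ℝ) + 2 - 1 = (m : ℝ) + 1 from by ring]
  linarith [fact2, hdiv]
end

section
/- Let n ≥ 2, m ≥ 1, and for each α ∈ Fin m let A^α be a real symmetric n × n matrix. Set H² := (1/n²) ∑_α (trace A^α)² and s := ∑_α ∑_{i,j} (A^α i j)². Then ∑_α [ (trace A^α)(A^α 0 0) − ∑_j (A^α 0 j)² ] ≤ (n²/4) H². -/
theorem stmt_12 (n m : ℕ) (hn : 2 ≤ n) (hm : 1 ≤ m)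
    (A : Fin m → Matrix (Fin n) (Fin n) ℝ) (hA : ∀ α, (A α).IsSymm)
    (H2 s : ℝ)
    (hH2 : H2 = (1 / (n : ℝ) ^ 2) * ∑ α, (Matrix.trace (A α)) ^ 2)
    (hs : s = ∑ α, ∑ i, ∑ j, (A α i j) ^ 2) :
    ∑ α, (Matrix.trace (A α) * A α ⟨0, by omega⟩ ⟨0, by omega⟩
        - ∑ j, (A α ⟨0, by omega⟩ j) ^ 2)
      ≤ ((n : ℝ) ^ 2 / 4) * H2 := by
  have hn0 : (n : ℝ) ≠ 0 := by positivity
  have hrhs : ((n : ℝ) ^ 2 / 4) * H2 = ∑ α, (Matrix.trace (A α)) ^ 2 / 4 := by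
    rw [hH2, ← Finset.sum_div]
    field_simp
  rw [hrhs]
  apply Finset.sum_le_sum
  intro α _
  set t := Matrix.trace (A α)
  set a := A α ⟨0, by omega⟩ ⟨0, by omega⟩
  have h1 : a ^ 2 ≤ ∑ j, (A α ⟨0, by omega⟩ j) ^ 2 := by
    apply Finset.single_le_sum (f := fun j => (A α ⟨0, by omega⟩ j) ^ 2)
    · intro i _; positivity
    · exact Finset.mem_univ _
  nlinarith [sq_nonneg (t - 2 * a)]
end

section
/- Let n ≥ 2 and let A be a real symmetric n × n matrix such that (trace A)(A k k) − ∑_j (A k j)² = (trace A)²/4 for every k ∈ Fin n. Then either A = 0, or n = 2 and A is a scalar multiple of the identity (an umbilical point). -/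
theorem stmt_14 (n : ℕ) (hn : 2 ≤ n) (A : Matrix (Fin n) (Fin n) ℝ) (hA : A.IsSymm)
    (heq : ∀ k : Fin n,
      Matrix.trace A * A k k - ∑ j, (A k j) ^ 2 = (Matrix.trace A) ^ 2 / 4) :
    A = 0 ∨ (n = 2 ∧ ∃ c : ℝ, A = c • (1 : Matrix (Fin n) (Fin n) ℝ)) := by
  set t := Matrix.trace A with ht
  have hsum : ∀ k : Fin n, ∑ j, (A k j) ^ 2
      = (A k k) ^ 2 + ∑ j ∈ Finset.univ.erase k, (A k j) ^ 2 := by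
    intro k
    rw [← Finset.add_sum_erase _ _ (Finset.mem_univ k)]
  have hnonneg : ∀ k : Fin n, 0 ≤ ∑ j ∈ Finset.univ.erase k, (A k j) ^ 2 :=
    fun k => Finset.sum_nonneg fun j _ => sq_nonneg _
  have hdiag : ∀ k, A k k = t / 2 := by
    intro k
    have h := heq k
    rw [hsum k] at h
    nlinarith [sq_nonneg (A k k - t / 2), hnonneg k]
  have hoff : ∀ k j, j ≠ k → A k j = 0 := by
    intro k j hj
    have h := heq k
    rw [hsum k] at h
    have hzero : ∑ j ∈ Finset.univ.erase k, (A k j) ^ 2 = 0 := by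
      have := hdiag k; nlinarith
    have := (Finset.sum_eq_zero_iff_of_nonneg (fun j _ => sq_nonneg (A k j))).mp hzero j
      (Finset.mem_erase.mpr ⟨hj, Finset.mem_univ j⟩)
    exact pow_eq_zero_iff (two_ne_zero) |>.mp this
  have htrace : t = n * (t / 2) := by
    nth_rewrite 1 [ht, Matrix.trace]
    simp [Matrix.diag, hdiag, Finset.sum_const, mul_comm]
  by_cases h0 : t = 0
  · left
    ext i j
    by_cases hij : j = i
    · subst hij; simp [hdiag j, h0]
    · simp [hoff i j hij]
  · right
    have hn2 : (n : ℝ) = 2 := by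
      have : t * ((n : ℝ) - 2) = 0 := by ring_nf; linarith [htrace]
      rcases mul_eq_zero.mp this with h | h
      · exact absurd h h0
      · linarith
    constructor
    · exact_mod_cast hn2
    · refine ⟨t / 2, ?_⟩
      ext i j
      by_cases hij : j = i
      · subst hij; simp [hdiag j, Matrix.one_apply]
      · have : ¬ i = j := fun h => hij h.symm
        simp [hoff i j hij, Matrix.one_apply, this]
end
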